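/- Let F_q be a finite field and M an M_1-matrix over F_q. Then PR(M) ≤ (2q/(q−1)) · E_{x ∈ F_q^n}[rank M(x)], where the expectation is over a uniformly random x ∈ F_q^n. -/

import Mathlib

open MvPolynomial

section Defs

variable {F : Type*} [Field F]

/-- A polynomial in the block variables `x_{i,j}` (`i ∈ Fin d`, `j ∈ Fin n`) is
multilinear exactly in the blocks of `S`: every monomial has degree 1 in each block
`i ∈ S` and degree 0 in each block `i ∉ S`. -/
def IsMultilinearOn {d n : ℕ} (S : Finset (Fin d))
    (f : MvPolynomial (Fin d × Fin n) F) : Prop :=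
  ∀ m ∈ f.support, ∀ i : Fin d,
    (∑ j : Fin n, m (i, j)) = if i ∈ S then 1 else 0

/-- A multilinear form: degree 1 in every block of variables. -/
def IsMultilinear {d n : ℕ} (f : MvPolynomial (Fin d × Fin n) F) : Prop :=
  IsMultilinearOn Finset.univ f

/-- Commutative rank: the rank of the matrix over the field of fractions of the
polynomial ring. -/
noncomputable def CR {σ : Type*} {α β : Type*} [Fintype β]
    (M : Matrix α β (MvPolynomial σ F)) : ℕ :=
  (M.map (algebraMap (MvPolynomial σ F) (FractionRing (MvPolynomial σ F)))).rank

/-- `M` is the sum of `r` outer products `u ⊗ v`, where `u` has entries multilinear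
in the blocks of some `S ⊆ [d]` and `v` has entries multilinear in the complementary
blocks. -/
def HasPRDecomp {d n a b : ℕ}
    (M : Matrix (Fin a) (Fin b) (MvPolynomial (Fin d × Fin n) F)) (r : ℕ) : Prop :=
  ∃ (S : Fin r → Finset (Fin d))
    (u : Fin r → Fin a → MvPolynomial (Fin d × Fin n) F)
    (v : Fin r → Fin b → MvPolynomial (Fin d × Fin n) F),
    (∀ t i, IsMultilinearOn (S t) (u t i)) ∧
    (∀ t j, IsMultilinearOn (S t)ᶜ (v t j)) ∧
    M = ∑ t, Matrix.of fun i j => u t i * v t j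

/-- Partition rank of a matrix of multilinear forms. -/
noncomputable def PR {d n a b : ℕ}
    (M : Matrix (Fin a) (Fin b) (MvPolynomial (Fin d × Fin n) F)) : ℕ :=
  sInf {r | HasPRDecomp M r}

/-- Evaluation of a matrix of multilinear forms at a point `p ∈ (F^n)^d`. -/
noncomputable def evalMat {d n : ℕ} {α β : Type*}
    (M : Matrix α β (MvPolynomial (Fin d × Fin n) F)) (p : Fin d → Fin n → F) :
    Matrix α β F :=
  M.map (eval fun v => p v.1 v.2)

/-- Max-rank: the largest rank of a scalar evaluation. -/
noncomputable def MaxR {d n : ℕ} {α β : Type*} [Fintype β]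
    (M : Matrix α β (MvPolynomial (Fin d × Fin n) F)) : ℕ :=
  ⨆ p : Fin d → Fin n → F, (evalMat M p).rank

/-- Partial evaluation: substitute `x_i := p_i` for `i ∈ S`, leaving the other
blocks of variables untouched. -/
noncomputable def pevalMat {d n : ℕ} {α β : Type*}
    (M : Matrix α β (MvPolynomial (Fin d × Fin n) F)) (S : Finset (Fin d))
    (p : Fin d → Fin n → F) :
    Matrix α β (MvPolynomial (Fin d × Fin n) F) :=
  M.map (aeval fun v : Fin d × Fin n => if v.1 ∈ S then C (p v.1 v.2) else X v)

end Defs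

section D1

variable {F : Type*} [Field F]

/-- Partition-rank decomposition for matrices of linear forms: a sum of `r` outer
products, each either (scalars) ⊗ (linear forms) or (linear forms) ⊗ (scalars). -/
def HasPR1Decomp {n a b : ℕ}
    (M : Matrix (Fin a) (Fin b) (MvPolynomial (Fin n) F)) (r : ℕ) : Prop :=
  ∃ (c : Fin r → Bool)
    (u : Fin r → Fin a → MvPolynomial (Fin n) F)
    (v : Fin r → Fin b → MvPolynomial (Fin n) F),
    (∀ t i, (u t i).IsHomogeneous (if c t then 0 else 1)) ∧
    (∀ t j, (v t j).IsHomogeneous (if c t then 1 else 0)) ∧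
    M = ∑ t, Matrix.of fun i j => u t i * v t j

/-- Partition rank of a matrix of linear forms. -/
noncomputable def PR1 {n a b : ℕ}
    (M : Matrix (Fin a) (Fin b) (MvPolynomial (Fin n) F)) : ℕ :=
  sInf {r | HasPR1Decomp M r}

/-- Max-rank of a matrix of linear forms. -/
noncomputable def MaxR1 {n a b : ℕ}
    (M : Matrix (Fin a) (Fin b) (MvPolynomial (Fin n) F)) : ℕ :=
  ⨆ p : Fin n → F, (M.map (eval p)).rank

end D1

section Tensor3

variable {F : Type*} [Field F]

/-- Substitute the first two blocks of variables of a trilinear form at `x` and `y`,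
leaving a polynomial in the third block. -/
noncomputable def sub01 {n : ℕ} (T : MvPolynomial (Fin 3 × Fin n) F)
    (x y : Fin n → F) : MvPolynomial (Fin 3 × Fin n) F :=
  aeval (fun v : Fin 3 × Fin n =>
    if v.1 = 0 then C (x v.2) else if v.1 = 1 then C (y v.2) else X v) T

open Classical in
/-- The bias of a 3-tensor: the probability over `(x, y)` that `T(x, y, -)` is the
zero linear form. -/
noncomputable def bias {n : ℕ} [Fintype F] (T : MvPolynomial (Fin 3 × Fin n) F) : ℝ :=
  ((Finset.univ.filter fun p : (Fin n → F) × (Fin n → F) =>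
      sub01 T p.1 p.2 = 0).card : ℝ) /
    ((Fintype.card ((Fin n → F) × (Fin n → F))) : ℝ)

/-- The analytic rank of a 3-tensor. -/
noncomputable def AR {n : ℕ} [Fintype F] (T : MvPolynomial (Fin 3 × Fin n) F) : ℝ :=
  - Real.logb (Fintype.card F) (bias T)

/-- A slice-rank decomposition: `T = ∑ f_t g_t` with `f_t` a linear form in one
block and `g_t` a bilinear form in the other two blocks. -/
def HasSRDecomp {n : ℕ} (T : MvPolynomial (Fin 3 × Fin n) F) (r : ℕ) : Prop :=
  ∃ (c : Fin r → Fin 3) (f g : Fin r → MvPolynomial (Fin 3 × Fin n) F),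
    (∀ t, IsMultilinearOn {c t} (f t)) ∧
    (∀ t, IsMultilinearOn ({c t} : Finset (Fin 3))ᶜ (g t)) ∧
    T = ∑ t, f t * g t

/-- Slice rank of a 3-tensor. -/
noncomputable def SR {n : ℕ} (T : MvPolynomial (Fin 3 × Fin n) F) : ℕ :=
  sInf {r | HasSRDecomp T r}

/-- The matrix `mat T` of a 3-tensor, evaluated at `x` in its first block:
the `(j,k)` entry is `T(x, e_j, e_k)`. -/
noncomputable def matT {n : ℕ} (T : MvPolynomial (Fin 3 × Fin n) F)
    (x : Fin n → F) : Matrix (Fin n) (Fin n) F :=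
  Matrix.of fun j k => eval (fun v : Fin 3 × Fin n =>
    if v.1 = 0 then x v.2
    else if v.1 = 1 then (if v.2 = j then 1 else 0)
    else (if v.2 = k then 1 else 0)) T

end Tensor3

section Mult

variable {F : Type*} [Field F]

/-- `mult(f, p)`: the minimum total degree of a monomial of `f(x + p)`. -/
noncomputable def polyMult {n : ℕ} (f : MvPolynomial (Fin n) F) (p : Fin n → F) : ℕ :=
  sInf {k | ∃ m ∈ (aeval (fun i : Fin n => X i + C (p i)) f :
    MvPolynomial (Fin n) F).support, (∑ i, m i) = k}

end Mult
section PartA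

open MvPolynomial

namespace St18

variable {F : Type*} [Field F] {n : ℕ}

lemma single_of_degsum_one {m : Fin n →₀ ℕ} (h : (∑ i ∈ m.support, m i) = 1) :
    ∃ k, m = Finsupp.single k 1 := by
  have hne : m.support.Nonempty := by
    rcases Finset.eq_empty_or_nonempty m.support with h0 | h1
    · simp [h0] at h
    · exact h1
  obtain ⟨k, hk⟩ := hne
  refine ⟨k, ?_⟩
  have hk1 : m k = 1 := by
    have hmk : 1 ≤ m k := by
      have := Finsupp.mem_support_iff.mp hk
      omega
    have : m k ≤ ∑ i ∈ m.support, m i := Finset.single_le_sum (fun _ _ => Nat.zero_le _) hk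
    omega
  ext j
  rcases eq_or_ne j k with rfl | hjk
  · simp [hk1]
  · have : m j = 0 := by
      by_contra hj
      have hjs : j ∈ m.support := Finsupp.mem_support_iff.mpr hj
      have h2 : m j + m k ≤ ∑ i ∈ m.support, m i := by
        have hsub : ({j, k} : Finset (Fin n)) ⊆ m.support := by
          intro t ht
          simp only [Finset.mem_insert, Finset.mem_singleton] at ht
          rcases ht with rfl | rfl <;> assumption
        calc m j + m k = ∑ i ∈ ({j, k} : Finset (Fin n)), m i := (Finset.sum_pair hjk).symm
          _ ≤ ∑ i ∈ m.support, m i := Finset.sum_le_sum_of_subset hsub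
      omega
    simp [this, Finsupp.single_apply, Ne.symm hjk]

lemma repr1 (p : MvPolynomial (Fin n) F) (hp : p.IsHomogeneous 1) :
    p = ∑ k : Fin n, C (coeff (Finsupp.single k 1) p) * X k := by
  apply MvPolynomial.ext
  intro m
  rw [MvPolynomial.coeff_sum]
  simp only [MvPolynomial.coeff_C_mul, MvPolynomial.coeff_X']
  by_cases hm : m ∈ p.support
  · have hw : (∑ i ∈ m.support, m i) = 1 := by
      have := hp (MvPolynomial.mem_support_iff.mp hm)
      simpa [Finsupp.weight_apply, Finsupp.sum, mul_one] using this
    obtain ⟨k0, rfl⟩ := single_of_degsum_one hw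
    rw [Finset.sum_eq_single k0]
    · simp
    · intro k _ hk
      have : ¬ (Finsupp.single k 1 = Finsupp.single k0 1) := by
        simp [Finsupp.single_left_inj (one_ne_zero (α := ℕ)), hk]
      simp [this]
    · intro h; exact absurd (Finset.mem_univ k0) h
  · have hz : coeff m p = 0 := by simpa using MvPolynomial.notMem_support_iff.mp hm
    rw [hz]
    apply (Finset.sum_eq_zero ?_).symm
    intro k _
    by_cases h : Finsupp.single k 1 = m
    · rw [if_pos h, h]
      simp [hz]
    · simp [h]

lemma evalRepr (p : MvPolynomial (Fin n) F) (hp : p.IsHomogeneous 1) (x : Fin n → F) :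
    eval x p = ∑ k : Fin n, coeff (Finsupp.single k 1) p * x k := by
  conv_lhs => rw [repr1 p hp]
  simp [MvPolynomial.eval_sum]

lemma eval_add_smul (p : MvPolynomial (Fin n) F) (hp : p.IsHomogeneous 1)
    (x y : Fin n → F) (t : F) :
    eval (x + t • y) p = eval x p + t * eval y p := by
  rw [evalRepr p hp, evalRepr p hp, evalRepr p hp]
  rw [Finset.mul_sum, ← Finset.sum_add_distrib]
  apply Finset.sum_congr rfl
  intro k _
  simp [Pi.add_apply, Pi.smul_apply, smul_eq_mul]
  ring

lemma eq_zero_of_eval_zero (p : MvPolynomial (Fin n) F) (hp : p.IsHomogeneous 1)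
    (h : ∀ x, eval x p = 0) : p = 0 := by
  have hc : ∀ k, coeff (Finsupp.single k 1) p = 0 := by
    intro k
    have := h (Pi.single k 1)
    rw [evalRepr p hp] at this
    rw [Finset.sum_eq_single k] at this
    · simpa using this
    · intro j _ hj; simp [Pi.single_apply, hj]
    · intro hk; exact absurd (Finset.mem_univ k) hk
  rw [repr1 p hp]
  apply Finset.sum_eq_zero
  intro k _
  simp [hc k]

end St18
end PartA
section PartB

namespace St18
open Matrix

variable {F : Type*} [Field F]

lemma exists_indep_subfamily {ι κ : Type*} [Fintype ι] [Fintype κ] [DecidableEq κ]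
    (v : ι → (κ → F)) (r : ℕ)
    (hr : Module.finrank F (Submodule.span F (Set.range v)) = r) :
    ∃ g : Fin r → ι, Function.Injective g ∧ LinearIndependent F (v ∘ g) ∧
      Submodule.span F (Set.range (v ∘ g)) = Submodule.span F (Set.range v) := by
  classical
  obtain ⟨s, hsub, hspan, hind⟩ := exists_linearIndependent F (Set.range v)
  have hsfin : s.Finite := (Set.finite_range v).subset hsub
  haveI : Fintype s := hsfin.fintype
  have hcard : Fintype.card s = r := by
    have h1 : Module.finrank F (Submodule.span F s) = s.toFinset.card :=
      finrank_span_set_eq_card hind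
    rw [hspan, hr] at h1
    rw [← Set.toFinset_card]
    exact h1.symm
  have e : Fin r ≃ s := (Fintype.equivFinOfCardEq hcard).symm
  have hchoose : ∀ l : Fin r, ∃ i, v i = (e l : κ → F) := fun l => hsub (e l).2
  choose g hg using hchoose
  refine ⟨g, ?_, ?_, ?_⟩
  · intro l1 l2 h
    have : (e l1 : κ → F) = (e l2 : κ → F) := by rw [← hg l1, ← hg l2, h]
    exact e.injective (Subtype.ext this)
  · have hfun : v ∘ g = (fun x : s => (x : κ → F)) ∘ e := by
      funext l; simp [Function.comp, hg l]
    rw [hfun]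
    exact hind.comp e e.injective
  · have hfun : v ∘ g = (fun x : s => (x : κ → F)) ∘ e := by
      funext l; simp [Function.comp, hg l]
    rw [hfun, Set.range_comp]
    rw [Set.range_eq_univ.mpr e.surjective]
    simp only [Set.image_univ, Subtype.range_coe_subtype, Set.setOf_mem_eq]
    rw [hspan]

lemma det_eq_zero_of_rows_in_lowrank {ι : Type*} [Fintype ι] [DecidableEq ι]
    (M W : Matrix ι ι F) (S : Finset ι)
    (hrow : ∀ i, i ∉ S → M i = W i)
    (hlt : Module.finrank F (Submodule.span F (Set.range W)) + S.card < Fintype.card ι) :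
    M.det = 0 := by
  classical
  set V := Submodule.span F (Set.range W) with hV
  have hdep : ¬ LinearIndependent F (fun i : {i // i ∉ S} => W (i : ι)) := by
    intro hli
    have hmem : ∀ i : {i // i ∉ S}, W (i : ι) ∈ V :=
      fun i => Submodule.subset_span (Set.mem_range_self _)
    have hli2 : LinearIndependent F (fun i : {i // i ∉ S} => (⟨W (i : ι), hmem i⟩ : V)) := by
      apply LinearIndependent.of_comp V.subtype
      convert hli
      rfl
    have hcard := hli2.fintype_card_le_finrank
    have hcompl : Fintype.card {i // i ∉ S} = Fintype.card ι - S.card := by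
      simpa using Fintype.card_subtype_compl (fun i => i ∈ S)
    have hSle : S.card ≤ Fintype.card ι := by
      simpa using Finset.card_le_card (Finset.subset_univ S)
    omega
  rw [Fintype.not_linearIndependent_iff] at hdep
  obtain ⟨g, hsum, i0, hi0⟩ := hdep
  set c : ι → F := fun i => if h : i ∉ S then g ⟨i, h⟩ else 0 with hc
  have hvm : Matrix.vecMul c M = 0 := by
    funext j
    have hv1 : Matrix.vecMul c M j = ∑ i, c i * M i j := by
      simp [Matrix.vecMul, dotProduct]
    have hsplit := Fintype.sum_subtype_add_sum_subtype (fun i => i ∉ S)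
      (fun i => c i * M i j)
    have hpos : (∑ i : {x // x ∉ S}, c (i : ι) * M (i : ι) j)
        = ∑ i : {x // x ∉ S}, g i * W (i : ι) j := by
      apply Finset.sum_congr rfl
      intro i _
      rw [hrow _ i.2]
      simp [hc, i.2]
    have hneg : (∑ i : {x // ¬ x ∉ S}, c (i : ι) * M (i : ι) j) = 0 := by
      apply Finset.sum_eq_zero
      intro i _
      simp [hc, i.2]
    have hval : (∑ i : {x // x ∉ S}, g i * W (i : ι) j) = 0 := by
      have := congrFun hsum j
      simpa using this
    have : Matrix.vecMul c M j = 0 := by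
      rw [hv1, ← hsplit, hpos, hneg, hval, add_zero]
    simpa using this
  have hc0 : c ≠ 0 := by
    intro h
    apply hi0
    have := congrFun h i0
    simpa [hc, i0.2] using this
  have : M.det = 0 := by
    rw [← Matrix.exists_vecMul_eq_zero_iff]
    exact ⟨c, hc0, hvm⟩
  exact this

lemma rank_submatrix_le' {m n ι κ : Type*} [Fintype m] [Fintype n] [Fintype ι] [Fintype κ]
    [DecidableEq n] [DecidableEq κ]
    (A : Matrix m n F) (f : ι → m) (g : κ → n) :
    (A.submatrix f g).rank ≤ A.rank := by
  classical
  have h1 : (A.submatrix f g).rank ≤ (A.submatrix f id).rank := by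
    rw [Matrix.rank_eq_finrank_span_cols, Matrix.rank_eq_finrank_span_cols]
    have hsub : Set.range (A.submatrix f g)ᵀ ⊆ (Submodule.span F (Set.range (A.submatrix f id)ᵀ) : Set _) := by
      rintro x ⟨k, rfl⟩
      apply Submodule.subset_span
      exact ⟨g k, rfl⟩
    calc Module.finrank F (Submodule.span F (Set.range (A.submatrix f g)ᵀ))
        ≤ Module.finrank F (Submodule.span F (Set.range (A.submatrix f id)ᵀ)) := by
          apply Submodule.finrank_mono
          rw [Submodule.span_le]
          exact hsub
      _ = _ := rfl
  have h2 : (A.submatrix f id).rank ≤ A.rank := by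
    rw [Matrix.rank_eq_finrank_span_row, Matrix.rank_eq_finrank_span_row]
    have hsub : Set.range (A.submatrix f id) ⊆ (Submodule.span F (Set.range A) : Set _) := by
      rintro x ⟨i, rfl⟩
      apply Submodule.subset_span
      exact ⟨f i, rfl⟩
    apply Submodule.finrank_mono
    rw [Submodule.span_le]
    exact hsub
  exact le_trans h1 h2

lemma isUnit_of_rows_linearIndependent {r : ℕ} (Q : Matrix (Fin r) (Fin r) F)
    (h : LinearIndependent F (fun l => Q l)) : IsUnit Q := by
  classical
  rw [Matrix.isUnit_iff_isUnit_det, isUnit_iff_ne_zero]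
  intro hdet
  rw [← Matrix.exists_vecMul_eq_zero_iff] at hdet
  obtain ⟨v, hv0, hv⟩ := hdet
  apply hv0
  have := Fintype.linearIndependent_iff.mp h v ?_
  · funext l; exact this l
  · funext j
    have := congrFun hv j
    simpa [Matrix.vecMul, dotProduct] using this

lemma exists_invertible_submatrix {a b : ℕ} (A : Matrix (Fin a) (Fin b) F) (r : ℕ)
    (hr : A.rank = r) :
    ∃ (ri : Fin r → Fin a) (ci : Fin r → Fin b), Function.Injective ri ∧
      Function.Injective ci ∧ IsUnit (A.submatrix ri ci) ∧
      Submodule.span F (Set.range (fun l => Aᵀ (ci l))) = Submodule.span F (Set.range Aᵀ) := by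
  classical
  have hcols : Module.finrank F (Submodule.span F (Set.range Aᵀ)) = r := by
    rw [show Set.range Aᵀ = Set.range A.col from rfl, ← Matrix.rank_eq_finrank_span_cols, hr]
  obtain ⟨ci, hciinj, hciind, hcispan⟩ := exists_indep_subfamily Aᵀ r hcols
  set A1 := A.submatrix id ci with hA1
  have hA1T : A1ᵀ = Aᵀ ∘ ci := by
    funext l i; rfl
  have hrankA1 : A1.rank = r := by
    rw [Matrix.rank_eq_finrank_span_cols, show A1.col = A1ᵀ from rfl, hA1T, hcispan, hcols]
  have hrows : Module.finrank F (Submodule.span F (Set.range A1)) = r := by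
    rw [show Set.range A1 = Set.range A1.row from rfl, ← Matrix.rank_eq_finrank_span_row, hrankA1]
  obtain ⟨ri, hriinj, hriind, _⟩ := exists_indep_subfamily A1 r hrows
  refine ⟨ri, ci, hriinj, hciinj, ?_, hcispan⟩
  have hQ : A.submatrix ri ci = fun l => A1 (ri l) := by
    funext l l'; rfl
  apply isUnit_of_rows_linearIndependent
  rw [hQ]
  exact hriind

lemma exists_unit_extension {a R : ℕ} (X : Matrix (Fin a) (Fin R) F) (ri0 : Fin R → Fin a)
    (hinj : Function.Injective ri0) (hX : IsUnit (X.submatrix ri0 id)) :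
    ∃ G : Matrix (Fin a) (Fin a) F, IsUnit G ∧ ∀ i l, G i (ri0 l) = X i l := by
  classical
  set Q := X.submatrix ri0 id with hQdef
  set G : Matrix (Fin a) (Fin a) F :=
    fun i j => if h : ∃ l, ri0 l = j then X i h.choose else (if i = j then 1 else 0) with hG
  have hGprop : ∀ i l, G i (ri0 l) = X i l := by
    intro i l
    have h : ∃ l', ri0 l' = ri0 l := ⟨l, rfl⟩
    have : h.choose = l := hinj h.choose_spec
    simp [hG, dif_pos h, this]
  refine ⟨G, ?_, hGprop⟩
  rw [Matrix.isUnit_iff_isUnit_det, isUnit_iff_ne_zero]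
  intro hdet
  rw [← Matrix.exists_mulVec_eq_zero_iff] at hdet
  obtain ⟨v, hv0, hv⟩ := hdet
  apply hv0
  set img := Finset.univ.image ri0 with himg
  have hsplit : ∀ i, G.mulVec v i = (∑ l, X i l * v (ri0 l)) + (if i ∈ img then 0 else v i) := by
    intro i
    have : G.mulVec v i = ∑ j, G i j * v j := by
      simp [Matrix.mulVec, dotProduct]
    rw [this, ← Finset.sum_add_sum_compl img]
    congr 1
    · rw [himg, Finset.sum_image (fun x _ y _ h => hinj h)]
      apply Finset.sum_congr rfl
      intro l _
      rw [hGprop]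
    · have hz : ∀ j ∈ imgᶜ, G i j * v j = (if i = j then 1 else 0) * v j := by
        intro j hj
        have hnj : ¬ ∃ l, ri0 l = j := by
          intro ⟨l, hl⟩
          rw [Finset.mem_compl, himg] at hj
          exact hj (Finset.mem_image.mpr ⟨l, Finset.mem_univ l, hl⟩)
        rw [hG]; simp [dif_neg hnj]
      rw [Finset.sum_congr rfl hz]
      by_cases hi : i ∈ img
      · rw [if_pos hi]
        apply Finset.sum_eq_zero
        intro j hj
        have : i ≠ j := by
          intro h; rw [← h] at hj; exact (Finset.mem_compl.mp hj) hi
        simp [this]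
      · rw [if_neg hi]
        rw [Finset.sum_eq_single i]
        · simp
        · intro j _ hji; simp [Ne.symm hji]
        · intro h; exact absurd (Finset.mem_compl.mpr hi) h
  have hw : (v ∘ ri0) = 0 := by
    have hQv : Q.mulVec (v ∘ ri0) = 0 := by
      funext l'
      have h1 := hsplit (ri0 l')
      have h2 : G.mulVec v (ri0 l') = 0 := by rw [hv]; rfl
      have hmem : ri0 l' ∈ img := Finset.mem_image.mpr ⟨l', Finset.mem_univ _, rfl⟩
      rw [h2, if_pos hmem, add_zero] at h1
      have : Q.mulVec (v ∘ ri0) l' = ∑ l, X (ri0 l') l * v (ri0 l) := by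
        simp [Matrix.mulVec, dotProduct, hQdef, Matrix.submatrix]
      rw [this, ← h1]
      rfl
    have hdQ : IsUnit Q.det := (Matrix.isUnit_iff_isUnit_det Q).mp hX
    calc v ∘ ri0 = (Q⁻¹ * Q).mulVec (v ∘ ri0) := by
            rw [Matrix.nonsing_inv_mul Q hdQ]; simp [Matrix.one_mulVec]
      _ = Q⁻¹.mulVec (Q.mulVec (v ∘ ri0)) := by rw [← Matrix.mulVec_mulVec]
      _ = 0 := by rw [hQv]; simp [Matrix.mulVec_zero]
  funext i
  have h1 := hsplit i
  have h2 : G.mulVec v i = 0 := by rw [hv]; rfl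
  have hzero : (∑ l, X i l * v (ri0 l)) = 0 := by
    apply Finset.sum_eq_zero
    intro l _
    have : v (ri0 l) = 0 := congrFun hw l
    simp [this]
  rw [h2, hzero, zero_add] at h1
  by_cases hi : i ∈ img
  · obtain ⟨l, _, rfl⟩ := Finset.mem_image.mp hi
    exact congrFun hw l
  · rw [if_neg hi] at h1; exact h1.symm

end St18
end PartB
section PartB2
namespace St18
open Matrix

variable {F : Type*} [Field F]

lemma exists_normal_form {a b : ℕ} (P : Matrix (Fin a) (Fin b) F) (R : ℕ) (hR : P.rank = R) :
    ∃ (S : Matrix (Fin a) (Fin a) F) (T : Matrix (Fin b) (Fin b) F)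
      (rI : Fin R → Fin a) (cI : Fin R → Fin b),
      IsUnit S ∧ IsUnit T ∧ Function.Injective rI ∧ Function.Injective cI ∧
      S * P * T = Matrix.of (fun i j => if (∃ l, rI l = i ∧ cI l = j) then (1:F) else 0) := by
  classical
  obtain ⟨ri0, ci0, hriinj, hciinj, hP0, hspan⟩ := exists_invertible_submatrix P R hR
  set P0 := P.submatrix ri0 ci0 with hP0def
  have hdetP0 : IsUnit P0.det := (Matrix.isUnit_iff_isUnit_det P0).mp hP0
  set Pc := P.submatrix id ci0 with hPc
  -- find U with P = Pc * U
  have hcolmem : ∀ j, ∃ u : Fin R → F, (∑ l, u l • (fun i => P i (ci0 l))) = Pᵀ j := by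
    intro j
    have hmem : Pᵀ j ∈ Submodule.span F (Set.range (fun l => Pᵀ (ci0 l))) := by
      rw [hspan]
      exact Submodule.subset_span (Set.mem_range_self j)
    rw [Submodule.mem_span_range_iff_exists_fun] at hmem
    obtain ⟨u, hu⟩ := hmem
    exact ⟨u, hu⟩
  choose u hu using hcolmem
  set U : Matrix (Fin R) (Fin b) F := fun l j => u j l with hU
  have hPU : P = Pc * U := by
    ext i j
    have := congrFun (hu j) i
    simp only [Finset.sum_apply, Pi.smul_apply, smul_eq_mul] at this
    rw [Matrix.transpose_apply] at this
    rw [Matrix.mul_apply, ← this]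
    apply Finset.sum_congr rfl
    intro l _
    simp only [hPc, hU, Matrix.submatrix_apply, id_eq]
    ring
  set Pr := P.submatrix ri0 id with hPr
  have hPrP0U : Pr = P0 * U := by
    ext l j
    rw [Matrix.mul_apply]
    have := congrFun (congrFun (congrArg (fun M => M) hPU) (ri0 l)) j
    have h2 : P (ri0 l) j = ∑ k, Pc (ri0 l) k * U k j := by
      rw [hPU]; rw [Matrix.mul_apply]
    simpa [hPr, hP0def, hPc, Matrix.submatrix] using h2
  set X := Pc * P0⁻¹ with hX
  have hXP : X * Pr = P := by
    rw [hPrP0U, hX]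
    calc Pc * P0⁻¹ * (P0 * U) = Pc * (P0⁻¹ * P0) * U := by
          rw [Matrix.mul_assoc, Matrix.mul_assoc, Matrix.mul_assoc]
      _ = Pc * U := by rw [Matrix.nonsing_inv_mul P0 hdetP0, Matrix.mul_one]
      _ = P := hPU.symm
  have hXsub : X.submatrix ri0 id = P0 * P0⁻¹ := by
    ext l l'
    rw [Matrix.mul_apply]
    simp only [Matrix.submatrix_apply, id_eq, hX, Matrix.mul_apply]
    apply Finset.sum_congr rfl
    intro k _
    simp [hPc, hP0def, Matrix.submatrix]
  have hXunit : IsUnit (X.submatrix ri0 id) := by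
    rw [hXsub, Matrix.mul_nonsing_inv P0 hdetP0]
    exact isUnit_one
  obtain ⟨G, hGunit, hGprop⟩ := exists_unit_extension X ri0 hriinj hXunit
  -- right side
  set Y := Prᵀ with hY
  have hYsub : Y.submatrix ci0 id = P0ᵀ := by
    ext l l'
    simp [hY, hPr, hP0def, Matrix.submatrix, Matrix.transpose_apply]
  have hYunit : IsUnit (Y.submatrix ci0 id) := by
    rw [hYsub, Matrix.isUnit_iff_isUnit_det, Matrix.det_transpose]
    exact hdetP0
  obtain ⟨H, hHunit, hHprop⟩ := exists_unit_extension Y ci0 hciinj hYunit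
  have hHprop' : ∀ j l, H j (ci0 l) = Pr l j := by
    intro j l; rw [hHprop]; rfl
  set Z : Matrix (Fin a) (Fin b) F :=
    Matrix.of (fun i j => if (∃ l, ri0 l = i ∧ ci0 l = j) then (1:F) else 0) with hZ
  -- key : G * Z * Hᵀ = P
  have hK : ∀ i' j, (Z * Hᵀ) i' j = if h : ∃ l, ri0 l = i' then Pr h.choose j else 0 := by
    intro i' j
    rw [Matrix.mul_apply]
    by_cases h : ∃ l, ri0 l = i'
    · rw [dif_pos h]
      set l0 := h.choose with hl0
      have hl0spec : ri0 l0 = i' := h.choose_spec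
      rw [Finset.sum_eq_single (ci0 l0)]
      · have : ∃ l, ri0 l = i' ∧ ci0 l = ci0 l0 := ⟨l0, hl0spec, rfl⟩
        simp only [hZ, Matrix.of_apply, if_pos this, one_mul, Matrix.transpose_apply]
        exact hHprop' j l0
      · intro j' _ hj'
        have : ¬ ∃ l, ri0 l = i' ∧ ci0 l = j' := by
          rintro ⟨l, hl1, hl2⟩
          have : l = l0 := hriinj (by rw [hl1, hl0spec])
          rw [this] at hl2
          exact hj' (hl2.symm ▸ rfl)
        simp [hZ, this]
      · intro hmem; exact absurd (Finset.mem_univ _) hmem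
    · rw [dif_neg h]
      apply Finset.sum_eq_zero
      intro j' _
      have : ¬ ∃ l, ri0 l = i' ∧ ci0 l = j' := by
        rintro ⟨l, hl1, _⟩; exact h ⟨l, hl1⟩
      simp [hZ, this]
  have hGZH : G * Z * Hᵀ = P := by
    rw [Matrix.mul_assoc]
    ext i j
    rw [Matrix.mul_apply]
    rw [← hXP]
    rw [Matrix.mul_apply]
    set img := Finset.univ.image ri0 with himg
    rw [← Finset.sum_add_sum_compl img]
    have hcompl : ∑ i' ∈ imgᶜ, G i i' * (Z * Hᵀ) i' j = 0 := by
      apply Finset.sum_eq_zero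
      intro i' hi'
      have hni' : ¬ ∃ l, ri0 l = i' := by
        rintro ⟨l, hl⟩
        rw [Finset.mem_compl, himg] at hi'
        exact hi' (Finset.mem_image.mpr ⟨l, Finset.mem_univ _, hl⟩)
      rw [hK, dif_neg hni', mul_zero]
    rw [hcompl, add_zero, himg, Finset.sum_image (fun x _ y _ h => hriinj h)]
    apply Finset.sum_congr rfl
    intro l _
    rw [hK]
    have h : ∃ l', ri0 l' = ri0 l := ⟨l, rfl⟩
    rw [dif_pos h]
    have : h.choose = l := hriinj h.choose_spec
    rw [this, hGprop]
  have hdetG : IsUnit G.det := (Matrix.isUnit_iff_isUnit_det G).mp hGunit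
  have hHTunit : IsUnit Hᵀ := by
    rw [Matrix.isUnit_iff_isUnit_det, Matrix.det_transpose]
    exact (Matrix.isUnit_iff_isUnit_det H).mp hHunit
  set SS : Matrix (Fin a) (Fin a) F := ((hGunit.unit⁻¹ : (Matrix (Fin a) (Fin a) F)ˣ) : Matrix (Fin a) (Fin a) F) with hSS
  set TT : Matrix (Fin b) (Fin b) F := ((hHTunit.unit⁻¹ : (Matrix (Fin b) (Fin b) F)ˣ) : Matrix (Fin b) (Fin b) F) with hTT
  refine ⟨SS, TT, ri0, ci0, Units.isUnit _, Units.isUnit _, hriinj, hciinj, ?_⟩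
  have hGu : (hGunit.unit : Matrix (Fin a) (Fin a) F) = G := hGunit.unit_spec
  have hHu : (hHTunit.unit : Matrix (Fin b) (Fin b) F) = Hᵀ := hHTunit.unit_spec
  have hSG : SS * G = 1 := by
    have h := hGunit.unit.inv_mul
    rw [hGu] at h
    exact h
  have hHT : Hᵀ * TT = 1 := by
    have h := hHTunit.unit.mul_inv
    rw [hHu] at h
    exact h
  calc SS * P * TT = SS * (G * Z * Hᵀ) * TT := by rw [hGZH]
    _ = (SS * G) * Z * (Hᵀ * TT) := by simp only [Matrix.mul_assoc]
    _ = Z := by rw [hSG, hHT, Matrix.one_mul, Matrix.mul_one]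
end St18
end PartB2
section PartC
namespace St18
open Matrix

variable {F : Type*} [Field F] {ι : Type*} [Fintype ι] [DecidableEq ι]

/-- mixed matrix: rows in `S` from `Ym`, rows outside from `Xm`. -/
def mixM (Xm Ym : Matrix ι ι F) (S : Finset ι) : Matrix ι ι F :=
  Matrix.of fun i j => if i ∈ S then Ym i j else Xm i j

lemma det_C_add_X_mul (Xm Ym : Matrix ι ι F) :
    (Xm.map Polynomial.C + (Polynomial.X : Polynomial F) • Ym.map Polynomial.C).det
      = ∑ S : Finset ι, Polynomial.C ((mixM Xm Ym S).det) * Polynomial.X ^ S.card := by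
  set f := (Matrix.detRowAlternating (n := ι) (R := Polynomial F)).toMultilinearMap with hf
  have h0 : (Xm.map Polynomial.C + (Polynomial.X : Polynomial F) • Ym.map Polynomial.C).det
      = f ((fun i => (Polynomial.X : Polynomial F) • (Ym.map Polynomial.C) i) + (fun i => (Xm.map Polynomial.C) i)) := by
    show Matrix.det _ = Matrix.det _
    congr 1
    funext i j
    simp [Matrix.add_apply, Matrix.smul_apply]
    ring
  rw [h0, f.map_add_univ]
  apply Finset.sum_congr rfl
  intro S _
  set m : ι → (ι → Polynomial F) :=
    S.piecewise (fun i => (Ym.map Polynomial.C) i) (fun i => (Xm.map Polynomial.C) i) with hm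
  have hpiece : S.piecewise (fun i => (Polynomial.X : Polynomial F) • (Ym.map Polynomial.C) i)
      (fun i => (Xm.map Polynomial.C) i)
      = S.piecewise (fun i => (Polynomial.X : Polynomial F) • m i) m := by
    apply Finset.piecewise_congr
    · intro i hi
      rw [hm, Finset.piecewise_eq_of_mem _ _ _ hi]
    · intro i hi
      rw [hm, Finset.piecewise_eq_of_notMem _ _ _ hi]
  rw [hpiece]
  have hsmul := f.map_piecewise_smul (fun _ : ι => (Polynomial.X : Polynomial F)) m S
  rw [hsmul]
  have hdet : f m = Polynomial.C ((mixM Xm Ym S).det) := by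
    have hmat : (m : Matrix ι ι (Polynomial F)) = (mixM Xm Ym S).map Polynomial.C := by
      funext i j
      by_cases hi : i ∈ S
      · rw [hm]
        simp [Finset.piecewise_eq_of_mem _ _ _ hi, mixM, Matrix.map_apply, hi]
      · rw [hm]
        simp [Finset.piecewise_eq_of_notMem _ _ _ hi, mixM, Matrix.map_apply, hi]
    show Matrix.det (Matrix.of fun i j => m i j) = _
    have : (Matrix.of fun i j => m i j) = (mixM Xm Ym S).map Polynomial.C := by
      funext i j
      exact congrFun (congrFun hmat i) j
    rw [this]
    exact (RingHom.map_det (Polynomial.C : F →+* Polynomial F) (mixM Xm Ym S)).symm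
  rw [hdet]
  rw [Finset.prod_const]
  rw [smul_eq_mul]
  ring

lemma coeff_det_C_add_X_mul (Xm Ym : Matrix ι ι F) (d : ℕ) :
    ((Xm.map Polynomial.C + (Polynomial.X : Polynomial F) • Ym.map Polynomial.C).det).coeff d
      = ∑ S ∈ Finset.univ.filter (fun S : Finset ι => S.card = d), (mixM Xm Ym S).det := by
  rw [det_C_add_X_mul]
  rw [Polynomial.finset_sum_coeff]
  rw [← Finset.sum_filter_add_sum_filter_not Finset.univ (fun S : Finset ι => S.card = d)]
  have h2 : ∑ S ∈ Finset.univ.filter (fun S : Finset ι => ¬ S.card = d),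
      (Polynomial.C ((mixM Xm Ym S).det) * Polynomial.X ^ S.card).coeff d = 0 := by
    apply Finset.sum_eq_zero
    intro S hS
    rw [Polynomial.coeff_C_mul, Polynomial.coeff_X_pow]
    simp [Ne.symm (Finset.mem_filter.mp hS).2]
  rw [h2, add_zero]
  apply Finset.sum_congr rfl
  intro S hS
  rw [Polynomial.coeff_C_mul, Polynomial.coeff_X_pow]
  simp [(Finset.mem_filter.mp hS).2]

lemma natDegree_det_C_add_X_mul_le (Xm Ym : Matrix ι ι F) (R : ℕ)
    (hzero : ∀ S : Finset ι, R < S.card → (mixM Xm Ym S).det = 0) :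
    ((Xm.map Polynomial.C + (Polynomial.X : Polynomial F) • Ym.map Polynomial.C).det).natDegree ≤ R := by
  rw [det_C_add_X_mul]
  apply Polynomial.natDegree_sum_le_of_forall_le
  intro S _
  by_cases hS : S.card ≤ R
  · calc (Polynomial.C ((mixM Xm Ym S).det) * Polynomial.X ^ S.card).natDegree
        ≤ (Polynomial.C ((mixM Xm Ym S).det)).natDegree + (Polynomial.X ^ S.card : Polynomial F).natDegree :=
          Polynomial.natDegree_mul_le
      _ ≤ R := by
          rw [Polynomial.natDegree_C, Polynomial.natDegree_X_pow]
          omega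
  · rw [hzero S (by omega)]
    simp

end St18
end PartC
section PartD
namespace St18
open Matrix

variable {F : Type*} [Field F]

lemma sum_rootMultiplicity_le {p : Polynomial F} [Fintype F] (hp : p ≠ 0) :
    (∑ t : F, p.rootMultiplicity t) ≤ p.natDegree := by
  classical
  have h1 : ∀ t : F, p.rootMultiplicity t = p.roots.count t :=
    fun t => (Polynomial.count_roots p).symm
  calc (∑ t : F, p.rootMultiplicity t) = ∑ t : F, p.roots.count t :=
        Finset.sum_congr rfl (fun t _ => h1 t)
    _ = ∑ t ∈ p.roots.toFinset, p.roots.count t := by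
        rw [Finset.sum_subset (Finset.subset_univ p.roots.toFinset)]
        intro x _ hx
        rw [Multiset.count_eq_zero]
        intro hmem
        exact hx (Multiset.mem_toFinset.mpr hmem)
    _ = Multiset.card p.roots := Multiset.toFinset_sum_count_eq _
    _ ≤ p.natDegree := Polynomial.card_roots' p

lemma line_lemma [Fintype F] {a b R : ℕ} (A J D : Matrix (Fin a) (Fin b) F)
    (rI : Fin R → Fin a) (cI : Fin R → Fin b)
    (hrI : Function.Injective rI) (hcI : Function.Injective cI)
    (hJ : ∀ i j, J i j = if (∃ l, rI l = i ∧ cI l = j) then 1 else 0)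
    (hD : ∀ i j, D i j = if ((¬ ∃ l, rI l = i) ∧ (¬ ∃ l, cI l = j)) then A i j else 0) :
    Fintype.card F * (R + D.rank) ≤ (∑ t : F, (A + t • J).rank) + R := by
  classical
  set r2 := D.rank with hr2
  obtain ⟨ri, ci, hriinj, hciinj, hLu, -⟩ := exists_invertible_submatrix D r2 rfl
  have hLdet : (D.submatrix ri ci).det ≠ 0 := by
    intro h
    have := (Matrix.isUnit_iff_isUnit_det _).mp hLu
    rw [h] at this
    exact (isUnit_iff_ne_zero.mp this) rfl
  have hri_avoid : ∀ l0, ¬ ∃ l, rI l = ri l0 := by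
    intro l0 hex
    apply hLdet
    apply Matrix.det_eq_zero_of_row_eq_zero l0
    intro j
    rw [Matrix.submatrix_apply, hD, if_neg (fun hc => hc.1 hex)]
  have hci_avoid : ∀ l0, ¬ ∃ l, cI l = ci l0 := by
    intro l0 hex
    apply hLdet
    apply Matrix.det_eq_zero_of_column_eq_zero l0
    intro i
    rw [Matrix.submatrix_apply, hD, if_neg (fun hc => hc.2 hex)]
  have hDA : ∀ l l', D (ri l) (ci l') = A (ri l) (ci l') := by
    intro l l'
    rw [hD, if_pos ⟨hri_avoid l, hci_avoid l'⟩]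
  -- the combined index maps
  set ρ : Fin R ⊕ Fin r2 → Fin a := Sum.elim rI ri with hρ
  set σ : Fin R ⊕ Fin r2 → Fin b := Sum.elim cI ci with hσ
  set Asub := A.submatrix ρ σ with hAsub
  set Jsub := J.submatrix ρ σ with hJsubdef
  -- structure of Jsub
  have hJsub_inr : ∀ l0 v, Jsub (Sum.inr l0) v = 0 := by
    intro l0 v
    rw [hJsubdef, Matrix.submatrix_apply, hJ]
    rw [if_neg]
    rintro ⟨l, hl1, -⟩
    exact hri_avoid l0 ⟨l, hl1⟩
  have hJsub_inl_inr : ∀ l l0, Jsub (Sum.inl l) (Sum.inr l0) = 0 := by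
    intro l l0
    rw [hJsubdef, Matrix.submatrix_apply, hJ]
    rw [if_neg]
    rintro ⟨l', -, hl2⟩
    exact hci_avoid l0 ⟨l', hl2⟩
  have hJsub_inl_inl : ∀ l l', Jsub (Sum.inl l) (Sum.inl l') = if l = l' then 1 else 0 := by
    intro l l'
    rw [hJsubdef, Matrix.submatrix_apply, hJ]
    by_cases h : l = l'
    · subst h
      rw [if_pos ⟨l, rfl, rfl⟩, if_pos rfl]
    · rw [if_neg, if_neg h]
      rintro ⟨l'', h1, h2⟩
      exact h ((hrI h1).symm.trans (hcI h2))
  -- the polynomial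
  set m : Polynomial F := (Asub.map Polynomial.C
    + (Polynomial.X : Polynomial F) • Jsub.map Polynomial.C).det with hm
  -- terms with |S| > R vanish
  have hbig : ∀ S : Finset (Fin R ⊕ Fin r2), R < S.card → (mixM Asub Jsub S).det = 0 := by
    intro S hS
    have hexinr : ∃ l0, Sum.inr l0 ∈ S := by
      by_contra hno
      push_neg at hno
      have hsub : S ⊆ Finset.univ.image (Sum.inl : Fin R → Fin R ⊕ Fin r2) := by
        intro x hx
        cases x with
        | inl l => exact Finset.mem_image.mpr ⟨l, Finset.mem_univ _, rfl⟩
        | inr l0 => exact absurd hx (hno l0)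
      have := Finset.card_le_card hsub
      rw [Finset.card_image_of_injective _ Sum.inl_injective, Finset.card_univ,
        Fintype.card_fin] at this
      omega
    obtain ⟨l0, hl0⟩ := hexinr
    apply Matrix.det_eq_zero_of_row_eq_zero (Sum.inr l0)
    intro v
    show (if Sum.inr l0 ∈ S then Jsub (Sum.inr l0) v else Asub (Sum.inr l0) v) = 0
    rw [if_pos hl0, hJsub_inr]
  have hdegm : m.natDegree ≤ R := natDegree_det_C_add_X_mul_le Asub Jsub R hbig
  -- leading coefficient
  have hcoeffR : m.coeff R = (A.submatrix ri ci).det := by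
    rw [hm, coeff_det_C_add_X_mul]
    have hSfull : (Finset.univ.image (Sum.inl : Fin R → Fin R ⊕ Fin r2)).card = R := by
      rw [Finset.card_image_of_injective _ Sum.inl_injective, Finset.card_univ, Fintype.card_fin]
    rw [Finset.sum_eq_single (Finset.univ.image (Sum.inl : Fin R → Fin R ⊕ Fin r2))]
    · -- det of the full-inl mix
      have hmixval : mixM Asub Jsub (Finset.univ.image (Sum.inl : Fin R → Fin R ⊕ Fin r2))
          = Matrix.fromBlocks 1 0 (Matrix.of fun l0 l => Asub (Sum.inr l0) (Sum.inl l))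
              (Matrix.of fun l0 l0' => Asub (Sum.inr l0) (Sum.inr l0')) := by
        funext u v
        cases u with
        | inl l =>
          have hu : Sum.inl l ∈ Finset.univ.image (Sum.inl : Fin R → Fin R ⊕ Fin r2) :=
            Finset.mem_image.mpr ⟨l, Finset.mem_univ _, rfl⟩
          show (if _ ∈ _ then Jsub _ v else Asub _ v) = _
          rw [if_pos hu]
          cases v with
          | inl l' =>
            rw [hJsub_inl_inl]
            show _ = (1 : Matrix (Fin R) (Fin R) (F)) l l'
            rw [Matrix.one_apply]
          | inr l0 => rw [hJsub_inl_inr]; rfl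
        | inr l0 =>
          have hu : Sum.inr l0 ∉ Finset.univ.image (Sum.inl : Fin R → Fin R ⊕ Fin r2) := by
            intro hmem
            obtain ⟨l, -, hl⟩ := Finset.mem_image.mp hmem
            exact Sum.inl_ne_inr hl
          show (if _ ∈ _ then Jsub _ v else Asub _ v) = _
          rw [if_neg hu]
          cases v with
          | inl l' => rfl
          | inr l0' => rfl
      rw [hmixval, Matrix.det_fromBlocks_zero₁₂, Matrix.det_one, one_mul]
      congr 1
    · intro S hS hne
      rw [Finset.mem_filter] at hS
      rcases Nat.lt_or_ge R S.card with h | h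
      · exact hbig S h
      · -- S.card = R and S ≠ image inl: S must contain an inr
        have hcard : S.card = R := hS.2
        have hexinr : ∃ l0, Sum.inr l0 ∈ S := by
          by_contra hno
          push_neg at hno
          have hsub : S ⊆ Finset.univ.image (Sum.inl : Fin R → Fin R ⊕ Fin r2) := by
            intro x hx
            cases x with
            | inl l => exact Finset.mem_image.mpr ⟨l, Finset.mem_univ _, rfl⟩
            | inr l0 => exact absurd hx (hno l0)
          exact hne (Finset.eq_of_subset_of_card_le hsub (by omega))
        obtain ⟨l0, hl0⟩ := hexinr
        apply Matrix.det_eq_zero_of_row_eq_zero (Sum.inr l0)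
        intro v
        show (if Sum.inr l0 ∈ S then Jsub (Sum.inr l0) v else Asub (Sum.inr l0) v) = 0
        rw [if_pos hl0, hJsub_inr]
    · intro hmem
      exact absurd (Finset.mem_filter.mpr
        ⟨Finset.mem_univ (Finset.univ.image (Sum.inl : Fin R → Fin R ⊕ Fin r2)), hSfull⟩) hmem
  have hAsubdet : (A.submatrix ri ci).det ≠ 0 := by
    have : A.submatrix ri ci = D.submatrix ri ci := by
      funext l l'
      exact (hDA l l').symm
    rw [this]
    exact hLdet
  have hmne : m ≠ 0 := by
    intro h
    rw [h, Polynomial.coeff_zero] at hcoeffR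
    exact hAsubdet hcoeffR.symm
  -- per-point bound
  have hpoint : ∀ t : F, R + r2 ≤ (A + t • J).rank + m.rootMultiplicity t := by
    intro t
    rcases le_or_gt (R + r2) ((A + t • J).rank) with h | h
    · omega
    set ft := (A + t • J).rank with hft
    set d := R + r2 - ft with hd
    have hd0 : 0 < d := by omega
    set Bsub := (A + t • J).submatrix ρ σ with hBsub
    set mt : Polynomial F := (Bsub.map Polynomial.C
      + (Polynomial.X : Polynomial F) • Jsub.map Polynomial.C).det with hmt
    -- m is mt composed with (X - C t)
    set phi : Polynomial F →+* Polynomial F :=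
      ((Polynomial.aeval (Polynomial.X - Polynomial.C t) : Polynomial F →ₐ[F] Polynomial F)
        : Polynomial F →+* Polynomial F) with hphi
    have hmatrix : (Asub.map Polynomial.C + (Polynomial.X : Polynomial F) • Jsub.map Polynomial.C)
        = (Bsub.map Polynomial.C + (Polynomial.X : Polynomial F) • Jsub.map Polynomial.C).map phi := by
      funext u v
      simp only [Matrix.map_apply, Matrix.add_apply, Matrix.smul_apply, smul_eq_mul]
      rw [_root_.map_add phi, _root_.map_mul phi]
      have h1 : phi (Polynomial.C (Bsub u v)) = Polynomial.C (Bsub u v) := by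
        rw [hphi]
        simp
      have h2 : phi (Polynomial.X) = Polynomial.X - Polynomial.C t := by
        rw [hphi]
        simp
      have h3 : phi (Polynomial.C (Jsub u v)) = Polynomial.C (Jsub u v) := by
        rw [hphi]
        simp
      rw [h1, h2, h3]
      have hB : Bsub u v = A (ρ u) (σ v) + t * J (ρ u) (σ v) := by
        rw [hBsub, Matrix.submatrix_apply, Matrix.add_apply, Matrix.smul_apply, smul_eq_mul]
      have hA : Asub u v = A (ρ u) (σ v) := rfl
      have hJs : Jsub u v = J (ρ u) (σ v) := rfl
      rw [hB, hA, hJs, Polynomial.C_add, Polynomial.C_mul]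
      ring
    have hcomp : m = phi mt := by
      rw [hm, hmatrix, hmt]
      exact (RingHom.map_det phi _).symm
    -- low coefficients of mt vanish
    have hlow : ∀ d' < d, mt.coeff d' = 0 := by
      intro d' hd'
      rw [hmt, coeff_det_C_add_X_mul]
      apply Finset.sum_eq_zero
      intro S hS
      have hScard : S.card = d' := (Finset.mem_filter.mp hS).2
      apply det_eq_zero_of_rows_in_lowrank (mixM Bsub Jsub S) Bsub S
      · intro u hu
        funext v
        show (if u ∈ S then Jsub u v else Bsub u v) = Bsub u v
        rw [if_neg hu]
      · have hrankB : Module.finrank F (Submodule.span F (Set.range Bsub)) ≤ ft := by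
          rw [show Set.range Bsub = Set.range Bsub.row from rfl, ← Matrix.rank_eq_finrank_span_row]
          rw [hBsub, hft]
          exact rank_submatrix_le' (A + t • J) ρ σ
        have hcardι : Fintype.card (Fin R ⊕ Fin r2) = R + r2 := by
          simp
        omega
    have hdvd : (Polynomial.X : Polynomial F) ^ d ∣ mt := by
      rw [Polynomial.X_pow_dvd_iff]
      exact hlow
    obtain ⟨g, hg⟩ := hdvd
    have hdvd2 : (Polynomial.X - Polynomial.C t) ^ d ∣ m := by
      rw [hcomp, hg, _root_.map_mul phi, _root_.map_pow phi]
      have h2 : phi (Polynomial.X) = Polynomial.X - Polynomial.C t := by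
        rw [hphi]; simp
      rw [h2]
      exact Dvd.intro _ rfl
    have hmult : d ≤ m.rootMultiplicity t := by
      rw [Polynomial.le_rootMultiplicity_iff hmne]
      exact hdvd2
    omega
  -- sum up
  have hsum1 : ∑ t : F, (R + r2) ≤ ∑ t : F, ((A + t • J).rank + m.rootMultiplicity t) :=
    Finset.sum_le_sum (fun t _ => hpoint t)
  rw [Finset.sum_const, Finset.card_univ, smul_eq_mul] at hsum1
  rw [Finset.sum_add_distrib] at hsum1
  have hsum2 : (∑ t : F, m.rootMultiplicity t) ≤ R :=
    le_trans (sum_rootMultiplicity_le hmne) hdegm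
  omega

end St18
end PartD
section PartE1
namespace St18
open MvPolynomial Matrix

variable {F : Type*} [Field F] {n a b : ℕ}

lemma rank_zero_entry {P : Matrix (Fin a) (Fin b) F} (h : P.rank = 0) : P = 0 := by
  have hrange : LinearMap.range P.mulVecLin = ⊥ := by
    rw [Matrix.rank] at h
    exact Submodule.finrank_eq_zero.mp h
  funext i j
  have hcol : P.mulVec (Pi.single j 1) = 0 := by
    have : P.mulVec (Pi.single j 1) ∈ LinearMap.range P.mulVecLin := ⟨Pi.single j 1, rfl⟩
    rw [hrange] at this
    simpa using this
  have := congrFun hcol i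
  simp only [Matrix.mulVec, dotProduct, Pi.zero_apply] at this
  rw [Finset.sum_eq_single j] at this
  · simpa using this
  · intro k _ hk; simp [Pi.single_apply, hk]
  · intro hj; exact absurd (Finset.mem_univ j) hj

lemma decomp_zero : HasPR1Decomp (0 : Matrix (Fin a) (Fin b) (MvPolynomial (Fin n) F)) 0 := by
  refine ⟨Fin.elim0, Fin.elim0, Fin.elim0, fun t => t.elim0, fun t => t.elim0, ?_⟩
  rw [Finset.univ_eq_empty, Finset.sum_empty]

lemma decomp_add {M N : Matrix (Fin a) (Fin b) (MvPolynomial (Fin n) F)} {r s : ℕ}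
    (hM : HasPR1Decomp M r) (hN : HasPR1Decomp N s) :
    HasPR1Decomp (M + N) (r + s) := by
  obtain ⟨c1, u1, v1, hu1, hv1, hMeq⟩ := hM
  obtain ⟨c2, u2, v2, hu2, hv2, hNeq⟩ := hN
  refine ⟨Fin.append c1 c2, Fin.append u1 u2, Fin.append v1 v2, ?_, ?_, ?_⟩
  · intro t i
    induction t using Fin.addCases with
    | left t => simp only [Fin.append_left]; exact hu1 t i
    | right t => simp only [Fin.append_right]; exact hu2 t i
  · intro t j
    induction t using Fin.addCases with
    | left t => simp only [Fin.append_left]; exact hv1 t j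
    | right t => simp only [Fin.append_right]; exact hv2 t j
  · rw [Fin.sum_univ_add]
    rw [hMeq, hNeq]
    congr 1
    · apply Finset.sum_congr rfl
      intro t _
      ext i j
      simp only [Matrix.of_apply, Fin.append_left]
    · apply Finset.sum_congr rfl
      intro t _
      ext i j
      simp only [Matrix.of_apply, Fin.append_right]

lemma decomp_const_mul {R : ℕ} (G : Matrix (Fin a) (Fin R) F)
    (L : Fin R → Fin b → MvPolynomial (Fin n) F) (hL : ∀ l j, (L l j).IsHomogeneous 1) :
    HasPR1Decomp (Matrix.of fun i j => ∑ l, C (G i l) * L l j) R := by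
  refine ⟨fun _ => true, fun l i => C (G i l), fun l j => L l j, ?_, ?_, ?_⟩
  · intro t i
    simpa using MvPolynomial.isHomogeneous_C (Fin n) (G i t)
  · intro t j
    simpa using hL t j
  · ext i j
    simp only [Matrix.of_apply]
    rw [Matrix.sum_apply]
    rfl

lemma decomp_mul_const {R : ℕ} (L : Fin R → Fin a → MvPolynomial (Fin n) F)
    (G : Matrix (Fin R) (Fin b) F) (hL : ∀ l i, (L l i).IsHomogeneous 1) :
    HasPR1Decomp (Matrix.of fun i j => ∑ l, L l i * C (G l j)) R := by
  refine ⟨fun _ => false, fun l i => L l i, fun l j => C (G l j), ?_, ?_, ?_⟩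
  · intro t i
    simpa using hL t i
  · intro t j
    simpa using MvPolynomial.isHomogeneous_C (Fin n) (G t j)
  · ext i j
    simp only [Matrix.of_apply]
    rw [Matrix.sum_apply]
    rfl

lemma decomp_mul_units {M : Matrix (Fin a) (Fin b) (MvPolynomial (Fin n) F)} {r : ℕ}
    (S : Matrix (Fin a) (Fin a) F) (T : Matrix (Fin b) (Fin b) F)
    (h : HasPR1Decomp M r) :
    HasPR1Decomp ((S.map (C : F →+* MvPolynomial (Fin n) F)) * M *
      (T.map (C : F →+* MvPolynomial (Fin n) F))) r := by
  obtain ⟨c, u, v, hu, hv, hMeq⟩ := h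
  refine ⟨c, fun t i => ∑ i', C (S i i') * u t i', fun t j => ∑ j', v t j' * C (T j' j),
    ?_, ?_, ?_⟩
  · intro t i
    apply MvPolynomial.IsHomogeneous.sum
    intro i' _
    have := (MvPolynomial.isHomogeneous_C (Fin n) (S i i')).mul (hu t i')
    simpa using this
  · intro t j
    apply MvPolynomial.IsHomogeneous.sum
    intro j' _
    have := (hv t j').mul (MvPolynomial.isHomogeneous_C (Fin n) (T j' j))
    simpa using this
  · rw [hMeq]
    rw [Matrix.mul_sum, Matrix.sum_mul]
    apply Finset.sum_congr rfl
    intro t _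
    apply Matrix.ext
    intro i j
    rw [Matrix.mul_apply, Matrix.of_apply]
    have hentry : ∀ j', ((S.map (C : F →+* MvPolynomial (Fin n) F)) *
        (Matrix.of fun i j => u t i * v t j)) i j' = (∑ i', C (S i i') * u t i') * v t j' := by
      intro j'
      rw [Matrix.mul_apply, Finset.sum_mul]
      apply Finset.sum_congr rfl
      intro i' _
      simp only [Matrix.map_apply, Matrix.of_apply]
      ring
    calc ∑ j', ((S.map (C : F →+* MvPolynomial (Fin n) F)) *
          (Matrix.of fun i j => u t i * v t j)) i j' * (T.map (C : F →+* MvPolynomial (Fin n) F)) j' j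
        = ∑ j', ((∑ i', C (S i i') * u t i') * v t j') * C (T j' j) := by
          apply Finset.sum_congr rfl
          intro j' _
          rw [hentry j']
          rfl
      _ = (∑ i', C (S i i') * u t i') * ∑ j', v t j' * C (T j' j) := by
          rw [Finset.mul_sum]
          apply Finset.sum_congr rfl
          intro j' _
          ring

end St18
end PartE1
section PartE2
namespace St18
open MvPolynomial Matrix

variable {F : Type*} [Field F] [Fintype F]

lemma main_induction {n a b : ℕ} (hn : 1 ≤ n) :
    ∀ s : ℕ, ∀ M : Matrix (Fin a) (Fin b) (MvPolynomial (Fin n) F),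
      (∀ i j, (M i j).IsHomogeneous 1) →
      (∑ x : Fin n → F, (M.map (eval x)).rank) = s →
      ∃ r : ℕ, HasPR1Decomp M r ∧
        (Fintype.card F - 1) * (Fintype.card F)^(n-1) * r ≤ 2 * s := by
  intro s
  induction s using Nat.strong_induction_on with
  | _ s IH =>
  intro M hM hs
  classical
  by_cases hz : ∀ (x : Fin n → F) (i : Fin a) (j : Fin b), eval x (M i j) = 0
  · refine ⟨0, ?_, by omega⟩
    have hM0 : M = 0 := by
      apply Matrix.ext
      intro i j
      have := eq_zero_of_eval_zero (M i j) (hM i j) (fun x => hz x i j)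
      simpa using this
    rw [hM0]
    exact decomp_zero
  · push_neg at hz
    obtain ⟨x0, i0, j0, hne⟩ := hz
    set q := Fintype.card F with hq
    have hq2 : 2 ≤ q := Fintype.one_lt_card
    set P := M.map (eval x0) with hP
    set R := P.rank with hR
    have hR1 : 1 ≤ R := by
      by_contra h
      have hR0 : P.rank = 0 := by omega
      have hPz := rank_zero_entry hR0
      apply hne
      have : P i0 j0 = 0 := by rw [hPz]; rfl
      simpa [hP, Matrix.map_apply] using this
    obtain ⟨S, T, rI, cI, hSu, hTu, hrIinj, hcIinj, hSPT⟩ := exists_normal_form P R hR.symm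
    have hSdet : IsUnit S.det := (Matrix.isUnit_iff_isUnit_det S).mp hSu
    have hTdet : IsUnit T.det := (Matrix.isUnit_iff_isUnit_det T).mp hTu
    set CS := S.map (C : F →+* MvPolynomial (Fin n) F) with hCS
    set CT := T.map (C : F →+* MvPolynomial (Fin n) F) with hCT
    set M₁ := CS * M * CT with hM₁
    have hM₁hom : ∀ i j, (M₁ i j).IsHomogeneous 1 := by
      intro i j
      rw [hM₁, hCS, hCT]
      rw [Matrix.mul_apply]
      apply MvPolynomial.IsHomogeneous.sum
      intro j' _
      rw [Matrix.mul_apply, Finset.sum_mul]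
      apply MvPolynomial.IsHomogeneous.sum
      intro i' _
      simp only [Matrix.map_apply]
      have h1 := ((MvPolynomial.isHomogeneous_C (Fin n) (S i i')).mul (hM i' j')).mul
        (MvPolynomial.isHomogeneous_C (Fin n) (T j' j))
      simpa using h1
    have hMeval : ∀ x : Fin n → F, M₁.map (eval x) = S * (M.map (eval x)) * T := by
      intro x
      rw [hM₁, Matrix.map_mul, Matrix.map_mul]
      congr 1
      · congr 1
        rw [hCS]
        apply Matrix.ext
        intro i i'
        simp [Matrix.map_apply]
      · rw [hCT]
        apply Matrix.ext
        intro j' j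
        simp [Matrix.map_apply]
    set J : Matrix (Fin a) (Fin b) F :=
      Matrix.of (fun i j => if (∃ l, rI l = i ∧ cI l = j) then (1:F) else 0) with hJdef
    have hJeq : M₁.map (eval x0) = J := by
      rw [hMeval x0, ← hP, hSPT, hJdef]
    have hrank_eq : ∀ x, (M₁.map (eval x)).rank = (M.map (eval x)).rank := by
      intro x
      rw [hMeval x, Matrix.rank_mul_eq_left_of_isUnit_det T _ hTdet,
        Matrix.rank_mul_eq_right_of_isUnit_det S _ hSdet]
    set M' : Matrix (Fin a) (Fin b) (MvPolynomial (Fin n) F) :=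
      Matrix.of (fun i j =>
        if ((¬ ∃ l, rI l = i) ∧ (¬ ∃ l, cI l = j)) then M₁ i j else 0) with hM'def
    have hM'hom : ∀ i j, (M' i j).IsHomogeneous 1 := by
      intro i j
      rw [hM'def]
      simp only [Matrix.of_apply]
      by_cases h : ((¬ ∃ l, rI l = i) ∧ (¬ ∃ l, cI l = j))
      · rw [if_pos h]; exact hM₁hom i j
      · rw [if_neg h]; exact MvPolynomial.isHomogeneous_zero _ _ _
    have hD : ∀ (x : Fin n → F) i j, (M'.map (eval x)) i j =
        if ((¬ ∃ l, rI l = i) ∧ (¬ ∃ l, cI l = j)) then (M₁.map (eval x)) i j else 0 := by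
      intro x i j
      rw [Matrix.map_apply, hM'def]
      simp only [Matrix.of_apply]
      by_cases h : ((¬ ∃ l, rI l = i) ∧ (¬ ∃ l, cI l = j))
      · rw [if_pos h, if_pos h]; rfl
      · rw [if_neg h, if_neg h]; simp
    set s' := ∑ x : Fin n → F, (M'.map (eval x)).rank with hs'
    -- the per-line estimates
    have hlines : ∀ x : Fin n → F,
        q * (R + (M'.map (eval x)).rank) ≤
          (∑ t : F, ((M₁.map (eval x)) + t • J).rank) + R := by
      intro x
      apply line_lemma (M₁.map (eval x)) J (M'.map (eval x)) rI cI hrIinj hcIinj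
      · intro i j; rw [hJdef]; rfl
      · intro i j; exact hD x i j
    -- line evaluation identity
    have hA_t : ∀ (x : Fin n → F) (t : F),
        (M₁.map (eval x)) + t • J = M₁.map (eval (x + t • x0)) := by
      intro x t
      apply Matrix.ext
      intro i j
      rw [Matrix.add_apply, Matrix.smul_apply, smul_eq_mul, Matrix.map_apply,
        Matrix.map_apply, eval_add_smul (M₁ i j) (hM₁hom i j) x x0 t]
      rw [← hJeq, Matrix.map_apply]
    have hdouble : (∑ x : Fin n → F, ∑ t : F, ((M₁.map (eval x)) + t • J).rank) = q * s := by
      rw [Finset.sum_comm]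
      have hone : ∀ t : F, (∑ x : Fin n → F, ((M₁.map (eval x)) + t • J).rank) = s := by
        intro t
        have h1 : ∀ x : Fin n → F, ((M₁.map (eval x)) + t • J).rank
            = (M₁.map (eval (x + t • x0))).rank := fun x => by rw [hA_t x t]
        rw [Finset.sum_congr rfl (fun x _ => h1 x)]
        have h2 : (∑ x : Fin n → F, (M₁.map (eval (x + t • x0))).rank)
            = ∑ x : Fin n → F, (M₁.map (eval x)).rank := by
          apply Fintype.sum_bijective (fun x : Fin n → F => x + t • x0)
            (Equiv.addRight (t • x0)).bijective
          intro x
          rfl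
        rw [h2, Finset.sum_congr rfl (fun x _ => hrank_eq x), hs]
      rw [Finset.sum_congr rfl (fun t _ => hone t), Finset.sum_const, Finset.card_univ,
        smul_eq_mul, ← hq]
    have hcardfun : Fintype.card (Fin n → F) = q ^ n := by
      rw [Fintype.card_fun, Fintype.card_fin, hq]
    -- summed inequality
    have hsummed : q * (q ^ n * R + s') ≤ q * s + q ^ n * R := by
      have h1 : (∑ x : Fin n → F, q * (R + (M'.map (eval x)).rank)) ≤
          ∑ x : Fin n → F, ((∑ t : F, ((M₁.map (eval x)) + t • J).rank) + R) :=
        Finset.sum_le_sum (fun x _ => hlines x)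
      have h2 : (∑ x : Fin n → F, q * (R + (M'.map (eval x)).rank))
          = q * (q ^ n * R + s') := by
        rw [← Finset.mul_sum]
        congr 1
        rw [Finset.sum_add_distrib, Finset.sum_const, Finset.card_univ, hcardfun,
          smul_eq_mul, hs']
      have h3 : (∑ x : Fin n → F, ((∑ t : F, ((M₁.map (eval x)) + t • J).rank) + R))
          = q * s + q ^ n * R := by
        rw [Finset.sum_add_distrib, Finset.sum_const, Finset.card_univ, hcardfun,
          smul_eq_mul, hdouble]
      rw [h2, h3] at h1
      exact h1
    set E := q ^ (n - 1) with hE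
    have hqn : q ^ n = q * E := by
      rw [hE, ← pow_succ']
      congr 1
      omega
    have hkey : s' + (q - 1) * (E * R) ≤ s := by
      rw [hqn] at hsummed
      have h4 : q * (q * (E * R) + s') ≤ q * (s + E * R) := by
        calc q * (q * (E * R) + s') = q * (q * E * R + s') := by ring
          _ ≤ q * s + q * E * R := hsummed
          _ = q * (s + E * R) := by ring
      have h5 : q * (E * R) + s' ≤ s + E * R :=
        Nat.le_of_mul_le_mul_left h4 (by omega)
      have h6 : (q - 1) * (E * R) = q * (E * R) - 1 * (E * R) := Nat.sub_mul q 1 (E * R)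
      generalize hu : E * R = u at h5 h6 ⊢
      have hvu : 2 * u ≤ q * u := Nat.mul_le_mul_right u hq2
      generalize hw : (q - 1) * u = w at h6 ⊢
      generalize hv : q * u = v at h5 h6 hvu ⊢
      omega
    have hER1 : 1 ≤ E * R := by
      have hE1 : 1 ≤ E := Nat.one_le_iff_ne_zero.mpr (pow_ne_zero _ (by omega))
      exact Nat.one_le_iff_ne_zero.mpr (Nat.mul_ne_zero (by omega) (by omega))
    have hs'lt : s' < s := by
      have h1 : 1 ≤ (q - 1) * (E * R) := Nat.one_le_iff_ne_zero.mpr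
        (Nat.mul_ne_zero (by omega) (by omega))
      omega
    -- apply the induction hypothesis
    obtain ⟨r', hdec', hle'⟩ := IH s' hs'lt M' hM'hom rfl
    -- decompose M₁
    set Gr : Matrix (Fin a) (Fin R) F :=
      Matrix.of (fun i l => if rI l = i then (1:F) else 0) with hGr
    set Lr : Fin R → Fin b → MvPolynomial (Fin n) F := fun l j => M₁ (rI l) j with hLr
    set ROW : Matrix (Fin a) (Fin b) (MvPolynomial (Fin n) F) :=
      Matrix.of (fun i j => ∑ l, C (Gr i l) * Lr l j) with hROW
    set Lc : Fin R → Fin a → MvPolynomial (Fin n) F :=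
      fun l i => if (∃ l', rI l' = i) then 0 else M₁ i (cI l) with hLc
    set Gc : Matrix (Fin R) (Fin b) F :=
      Matrix.of (fun l j => if cI l = j then (1:F) else 0) with hGc
    set COL : Matrix (Fin a) (Fin b) (MvPolynomial (Fin n) F) :=
      Matrix.of (fun i j => ∑ l, Lc l i * C (Gc l j)) with hCOL
    have hROWval : ∀ i j, ROW i j = if (∃ l, rI l = i) then M₁ i j else 0 := by
      intro i j
      rw [hROW]
      simp only [Matrix.of_apply]
      by_cases hex : ∃ l, rI l = i
      · obtain ⟨l0, hl0⟩ := hex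
        rw [if_pos ⟨l0, hl0⟩]
        rw [Finset.sum_eq_single l0]
        · rw [hGr]
          simp only [Matrix.of_apply, if_pos hl0]
          rw [MvPolynomial.C_1, one_mul]
          simp only [hLr]
          rw [hl0]
        · intro l _ hl
          have : ¬ (rI l = i) := by
            intro h
            exact hl (hrIinj (h.trans hl0.symm))
          rw [hGr]
          simp only [Matrix.of_apply, if_neg this]
          rw [MvPolynomial.C_0, zero_mul]
        · intro h; exact absurd (Finset.mem_univ l0) h
      · rw [if_neg hex]
        apply Finset.sum_eq_zero
        intro l _
        have : ¬ (rI l = i) := fun h => hex ⟨l, h⟩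
        rw [hGr]
        simp only [Matrix.of_apply, if_neg this]
        rw [MvPolynomial.C_0, zero_mul]
    have hCOLval : ∀ i j, COL i j =
        if ((¬ ∃ l', rI l' = i) ∧ (∃ l, cI l = j)) then M₁ i j else 0 := by
      intro i j
      rw [hCOL]
      simp only [Matrix.of_apply]
      by_cases hexc : ∃ l, cI l = j
      · obtain ⟨l0, hl0⟩ := hexc
        have hsum : (∑ l, Lc l i * C (Gc l j)) = Lc l0 i := by
          rw [Finset.sum_eq_single l0]
          · rw [hGc]
            simp only [Matrix.of_apply, if_pos hl0]
            rw [MvPolynomial.C_1, mul_one]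
          · intro l _ hl
            have : ¬ (cI l = j) := by
              intro h
              exact hl (hcIinj (h.trans hl0.symm))
            rw [hGc]
            simp only [Matrix.of_apply, if_neg this]
            rw [MvPolynomial.C_0, mul_zero]
          · intro h; exact absurd (Finset.mem_univ l0) h
        rw [hsum]
        simp only [hLc]
        by_cases hexr : ∃ l', rI l' = i
        · rw [if_pos hexr, if_neg (fun hc => hc.1 hexr)]
        · rw [if_neg hexr, if_pos ⟨hexr, ⟨l0, hl0⟩⟩, hl0]
      · rw [if_neg (fun hc => hexc hc.2)]
        apply Finset.sum_eq_zero
        intro l _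
        have : ¬ (cI l = j) := fun h => hexc ⟨l, h⟩
        rw [hGc]
        simp only [Matrix.of_apply, if_neg this]
        rw [MvPolynomial.C_0, mul_zero]
    have hsplit : M₁ = M' + (ROW + COL) := by
      apply Matrix.ext
      intro i j
      rw [Matrix.add_apply, Matrix.add_apply, hROWval i j, hCOLval i j, hM'def]
      simp only [Matrix.of_apply]
      by_cases hexr : ∃ l, rI l = i
      · simp [hexr]
      · by_cases hexc : ∃ l, cI l = j
        · simp [hexr, hexc]
        · simp [hexr, hexc]
    have hdecROW : HasPR1Decomp ROW R := by
      rw [hROW]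
      exact decomp_const_mul Gr Lr (fun l j => hM₁hom (rI l) j)
    have hdecCOL : HasPR1Decomp COL R := by
      rw [hCOL]
      apply decomp_mul_const Lc Gc
      intro l i
      show (if ∃ l', rI l' = i then (0 : MvPolynomial (Fin n) F) else M₁ i (cI l)).IsHomogeneous 1
      by_cases h : ∃ l', rI l' = i
      · rw [if_pos h]; exact MvPolynomial.isHomogeneous_zero _ _ _
      · rw [if_neg h]; exact hM₁hom i (cI l)
    have hdecM₁ : HasPR1Decomp M₁ (r' + (R + R)) := by
      rw [hsplit]
      exact decomp_add hdec' (decomp_add hdecROW hdecCOL)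
    have hSS : (S⁻¹.map (C : F →+* MvPolynomial (Fin n) F)) * CS = 1 := by
      rw [hCS, ← Matrix.map_mul, Matrix.nonsing_inv_mul S hSdet, Matrix.map_one]
      · exact map_zero _
      · exact map_one _
    have hTT : CT * (T⁻¹.map (C : F →+* MvPolynomial (Fin n) F)) = 1 := by
      rw [hCT, ← Matrix.map_mul, Matrix.mul_nonsing_inv T hTdet, Matrix.map_one]
      · exact map_zero _
      · exact map_one _
    have hMid : (S⁻¹.map (C : F →+* MvPolynomial (Fin n) F)) * M₁ *
        (T⁻¹.map (C : F →+* MvPolynomial (Fin n) F)) = M := by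
      calc (S⁻¹.map (C : F →+* MvPolynomial (Fin n) F)) * M₁ *
            (T⁻¹.map (C : F →+* MvPolynomial (Fin n) F))
          = ((S⁻¹.map (C : F →+* MvPolynomial (Fin n) F)) * CS) * M *
            (CT * (T⁻¹.map (C : F →+* MvPolynomial (Fin n) F))) := by
            rw [hM₁]
            simp only [Matrix.mul_assoc]
        _ = M := by rw [hSS, hTT, Matrix.one_mul, Matrix.mul_one]
    have hdecM : HasPR1Decomp M (r' + (R + R)) := by
      rw [← hMid]
      exact decomp_mul_units S⁻¹ T⁻¹ hdecM₁
    refine ⟨r' + (R + R), hdecM, ?_⟩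
    have hexp : (q - 1) * E * (r' + (R + R)) = (q-1)*E*r' + 2 * ((q-1) * (E*R)) := by ring
    rw [hexp]
    generalize hA : (q-1)*E*r' = A at hle' ⊢
    generalize hB : (q-1)*(E*R) = B at hkey ⊢
    omega

end St18
end PartE2
/-- For a matrix `M` of linear forms over `F_q`,
`PR(M) ≤ (2q/(q−1)) · E_x[rank M(x)]`. -/
theorem statement_18 (F : Type*) [Field F] [Fintype F] (n a b : ℕ) (hn : 1 ≤ n)
    (M : Matrix (Fin a) (Fin b) (MvPolynomial (Fin n) F))
    (hM : ∀ i j, (M i j).IsHomogeneous 1) :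
    (PR1 M : ℝ) ≤ 2 * (Fintype.card F : ℝ) / ((Fintype.card F : ℝ) - 1) *
      ((∑ x : Fin n → F, ((M.map (MvPolynomial.eval x)).rank : ℝ)) /
        (Fintype.card (Fin n → F) : ℝ)) := by
  classical
  have hq2 : 2 ≤ Fintype.card F := Fintype.one_lt_card
  set q := Fintype.card F with hq
  set s := ∑ x : Fin n → F, (M.map (MvPolynomial.eval x)).rank with hsdef
  obtain ⟨r, hdec, hble⟩ := St18.main_induction hn s M hM rfl
  have hPR : PR1 M ≤ r := Nat.sInf_le hdec
  have hcast : (∑ x : Fin n → F, ((M.map (MvPolynomial.eval x)).rank : ℝ)) = (s : ℝ) := by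
    rw [hsdef]
    push_cast
    rfl
  have hcard : (Fintype.card (Fin n → F) : ℝ) = (q : ℝ) ^ n := by
    rw [Fintype.card_fun, Fintype.card_fin]
    push_cast
    rfl
  have hq1R : (1 : ℝ) < (q : ℝ) := by
    have : (1 : ℕ) < q := by omega
    exact_mod_cast this
  have hEpos : (0 : ℝ) < ((q : ℝ) - 1) * (q : ℝ) ^ (n - 1) := by
    apply mul_pos
    · linarith
    · positivity
  have hble' : ((q : ℝ) - 1) * (q : ℝ) ^ (n - 1) * (r : ℝ) ≤ 2 * (s : ℝ) := by
    have h1 : (((q - 1) * q ^ (n - 1) * r : ℕ) : ℝ) ≤ ((2 * s : ℕ) : ℝ) :=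
      Nat.cast_le.mpr hble
    have h2 : ((q - 1 : ℕ) : ℝ) = (q : ℝ) - 1 := by
      have h3 : (1 : ℕ) ≤ q := by omega
      push_cast [h3]
      ring
    push_cast at h1
    rw [h2] at h1
    exact h1
  have hrhs : 2 * (q : ℝ) / ((q : ℝ) - 1) * ((s : ℝ) / (q : ℝ) ^ n)
      = 2 * (s : ℝ) / (((q : ℝ) - 1) * (q : ℝ) ^ (n - 1)) := by
    have hqn : (q : ℝ) ^ n = (q : ℝ) ^ (n - 1) * (q : ℝ) := by
      rw [← pow_succ]
      congr 1
      omega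
    rw [hqn]
    have hne1 : (q : ℝ) - 1 ≠ 0 := by linarith
    have hne2 : (q : ℝ) ≠ 0 := by linarith
    have hne3 : (q : ℝ) ^ (n - 1) ≠ 0 := by positivity
    field_simp
  calc (PR1 M : ℝ) ≤ (r : ℝ) := Nat.cast_le.mpr hPR
    _ ≤ 2 * (s : ℝ) / (((q : ℝ) - 1) * (q : ℝ) ^ (n - 1)) := by
        rw [le_div_iff₀ hEpos]
        calc (r : ℝ) * (((q : ℝ) - 1) * (q : ℝ) ^ (n - 1))
            = ((q : ℝ) - 1) * (q : ℝ) ^ (n - 1) * (r : ℝ) := by ring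
          _ ≤ 2 * (s : ℝ) := hble'
    _ = 2 * (q : ℝ) / ((q : ℝ) - 1) * ((s : ℝ) / (q : ℝ) ^ n) := hrhs.symm
    _ = 2 * (q : ℝ) / ((q : ℝ) - 1) *
        ((∑ x : Fin n → F, ((M.map (MvPolynomial.eval x)).rank : ℝ)) /
          (Fintype.card (Fin n → F) : ℝ)) := by
        rw [hcast, hcard]
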